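/- Let α, β ∈ ℂ and suppose φ, ψ₁, ψ₀ are smooth functions of x satisfying φ' = -φ(ψ₁ + ψ₀), ψ₁' = ψ₁(2φ + ψ₁ + 2x) - 4β, ψ₀' = ψ₀(-2φ + ψ₀ - 2x) - 2(2β - 1), together with the constraint ψ₀ - ψ₁ - φ + 2(α+β)/φ = 2x. Then y = φ satisfies the fourth Painlevé equation y'' = (y')²/(2y) + (3/2)y³ + 4xy² + 2(x² - ν₁)y + ν₂/y with ν₁ = α - 3β + 1 and ν₂ = -2(α+β)². -/

import Mathlib

/-- Similarity reduction of the ∂NLS hierarchy: under the system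
`φ' = -φ(ψ₁+ψ₀)`, `ψ₁' = ψ₁(2φ+ψ₁+2x) - 4β`, `ψ₀' = ψ₀(-2φ+ψ₀-2x) - 2(2β-1)`
with the constraint `ψ₀ - ψ₁ - φ + 2(α+β)/φ = 2x`, the function `y = φ`
satisfies the fourth Painlevé equation with `ν₁ = α - 3β + 1`,
`ν₂ = -2(α+β)²`. -/
theorem phi_solves_PIV (α β : ℂ) (φ ψ1 ψ0 : ℝ → ℂ)
    (hφ : Differentiable ℝ φ) (hψ1 : Differentiable ℝ ψ1)
    (hψ0 : Differentiable ℝ ψ0)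
    (hφne : ∀ x, φ x ≠ 0)
    (e1 : ∀ x : ℝ, deriv φ x = -φ x * (ψ1 x + ψ0 x))
    (e2 : ∀ x : ℝ, deriv ψ1 x = ψ1 x * (2 * φ x + ψ1 x + 2 * (x : ℂ)) - 4 * β)
    (e3 : ∀ x : ℝ, deriv ψ0 x = ψ0 x * (-2 * φ x + ψ0 x - 2 * (x : ℂ))
        - 2 * (2 * β - 1))
    (e4 : ∀ x : ℝ, ψ0 x - ψ1 x - φ x + 2 * (α + β) / φ x = 2 * (x : ℂ)) :
    ∀ x : ℝ,
      deriv (deriv φ) x =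
        (deriv φ x)^2 / (2 * φ x) + (3/2) * (φ x)^3 + 4 * (x : ℂ) * (φ x)^2
          + 2 * ((x : ℂ)^2 - (α - 3 * β + 1)) * φ x + (-2 * (α + β)^2) / φ x := by
  intro x
  have hd1 : HasDerivAt φ (-φ x * (ψ1 x + ψ0 x)) x := by
    rw [← e1 x]; exact (hφ x).hasDerivAt
  have hd2 : HasDerivAt ψ1 (ψ1 x * (2 * φ x + ψ1 x + 2 * (x : ℂ)) - 4 * β) x := by
    rw [← e2 x]; exact (hψ1 x).hasDerivAt
  have hd3 : HasDerivAt ψ0 (ψ0 x * (-2 * φ x + ψ0 x - 2 * (x : ℂ)) - 2 * (2 * β - 1)) x := by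
    rw [← e3 x]; exact (hψ0 x).hasDerivAt
  have hfun : deriv φ = fun t => -φ t * (ψ1 t + ψ0 t) := funext e1
  have H : HasDerivAt (fun t => -φ t * (ψ1 t + ψ0 t))
      (-(-φ x * (ψ1 x + ψ0 x)) * (ψ1 x + ψ0 x) +
        -φ x * ((ψ1 x * (2 * φ x + ψ1 x + 2 * (x : ℂ)) - 4 * β) +
          (ψ0 x * (-2 * φ x + ψ0 x - 2 * (x : ℂ)) - 2 * (2 * β - 1)))) x :=
    hd1.neg.mul (hd2.add hd3)
  rw [hfun, H.deriv]; beta_reduce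
  have key := e4 x
  have hne := hφne x
  field_simp at key ⊢
  ring_nf
  ring_nf at key
  linear_combination ((2)*φ x*(x:ℂ) + (-1)*φ x*ψ0 x + (1)*φ x*ψ1 x + (3)*(φ x)^2 + (2)*β + (2)*α) * key
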